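/- Let S ⊆ ℝ be measurable with 0 < ∫_S exp(−z²/2 + z·t) dz < ∞ for every t ∈ ℝ, and let x^(1), …, x^(n) ∈ ℝ^k. Then the function q(w) = (1/n)·Σ_{i=1}^n log( ∫_S exp(−z²/2 + z·⟨w, x^(i)⟩) dz ) is convex on ℝ^k; consequently, the population log-likelihood ℓ̄(w) = (1/n)·Σ_{i=1}^n E_{y ~ N(⟨w*,x^(i)⟩,1,S)}[ −(1/2)(y − ⟨w,x^(i)⟩)² − log ∫_S exp(−(z − ⟨w,x^(i)⟩)²/2) dz ] is a concave function of w. -/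

import Mathlib

open MeasureTheory ProbabilityTheory Real
open scoped RealInnerProductSpace ENNReal

/-- The survival probability `α(μ; S) = N(μ,1)(S)`. -/
noncomputable def survival (μ : ℝ) (S : Set ℝ) : ℝ :=
  (gaussianReal μ 1 S).toReal

/-- The truncated Gaussian `N(μ,1,S)`, i.e. `N(μ,1)` conditioned on `S`. -/
noncomputable def truncGaussian (μ : ℝ) (S : Set ℝ) : Measure ℝ :=
  (gaussianReal μ 1)[|S]


lemma holder_step {S : Set ℝ}
    (hint : ∀ t : ℝ, IntegrableOn (fun z : ℝ => Real.exp (-z ^ 2 / 2 + z * t)) S)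
    {a b θ₁ θ₂ : ℝ} (h1 : 0 < θ₁) (h2 : 0 < θ₂) (hsum : θ₁ + θ₂ = 1) :
    (∫ z in S, Real.exp (-z ^ 2 / 2 + z * (θ₁ * a + θ₂ * b))) ≤
      (∫ z in S, Real.exp (-z ^ 2 / 2 + z * a)) ^ θ₁ *
      (∫ z in S, Real.exp (-z ^ 2 / 2 + z * b)) ^ θ₂ := by
  set μ := (volume : Measure ℝ).restrict S with hμ
  have hpq : Real.HolderConjugate (1/θ₁) (1/θ₂) := by
    constructor
    · rw [one_div, one_div, inv_inv, inv_inv, inv_one]; exact hsum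
    · positivity
    · positivity
  have hmem : ∀ t θ : ℝ, 0 < θ →
      MemLp (fun z => Real.exp (-z ^ 2 / 2 + z * t) ^ θ) (ENNReal.ofReal (1/θ)) μ := by
    intro t θ hθ
    have h1' : MemLp (fun z : ℝ => Real.exp (-z ^ 2 / 2 + z * t)) 1 μ :=
      (memLp_one_iff_integrable).2 (hint t)
    have hq0 : (ENNReal.ofReal θ) ≠ 0 := by simp [hθ, hθ.le, hθ.ne']
    have := (memLp_norm_rpow_iff h1'.aestronglyMeasurable hq0 (by simp)).2 h1'
    have heq : (fun z : ℝ => ‖Real.exp (-z ^ 2 / 2 + z * t)‖ ^ (ENNReal.ofReal θ).toReal)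
        = fun z => Real.exp (-z ^ 2 / 2 + z * t) ^ θ := by
      funext z
      rw [ENNReal.toReal_ofReal hθ.le, Real.norm_of_nonneg (Real.exp_pos _).le]
    have hexp : (1 : ℝ≥0∞) / ENNReal.ofReal θ = ENNReal.ofReal (1/θ) := by
      rw [one_div, one_div, ENNReal.ofReal_inv_of_pos hθ]
    rwa [heq, hexp] at this
  have key := integral_mul_le_Lp_mul_Lq_of_nonneg hpq
    (f := fun z => Real.exp (-z ^ 2 / 2 + z * a) ^ θ₁)
    (g := fun z => Real.exp (-z ^ 2 / 2 + z * b) ^ θ₂)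
    (ae_of_all _ fun z => (Real.rpow_pos_of_pos (Real.exp_pos _) _).le)
    (ae_of_all _ fun z => (Real.rpow_pos_of_pos (Real.exp_pos _) _).le)
    (hmem a θ₁ h1) (hmem b θ₂ h2)
  have hfg : ∀ z : ℝ, Real.exp (-z ^ 2 / 2 + z * a) ^ θ₁ * Real.exp (-z ^ 2 / 2 + z * b) ^ θ₂
      = Real.exp (-z ^ 2 / 2 + z * (θ₁ * a + θ₂ * b)) := by
    intro z
    rw [← Real.exp_mul, ← Real.exp_mul, ← Real.exp_add]
    congr 1
    linear_combination (-z^2/2) * hsum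
  have hfp : ∀ (t : ℝ) (θ : ℝ), 0 < θ → ∀ z : ℝ,
      (Real.exp (-z ^ 2 / 2 + z * t) ^ θ) ^ (1/θ) = Real.exp (-z ^ 2 / 2 + z * t) := by
    intro t θ hθ z
    rw [← Real.rpow_mul (Real.exp_pos _).le, mul_one_div_cancel hθ.ne', Real.rpow_one]
  calc (∫ z in S, Real.exp (-z ^ 2 / 2 + z * (θ₁ * a + θ₂ * b)))
      = ∫ z in S, Real.exp (-z ^ 2 / 2 + z * a) ^ θ₁ * Real.exp (-z ^ 2 / 2 + z * b) ^ θ₂ := by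
        simp_rw [hfg]
    _ ≤ (∫ z in S, (Real.exp (-z ^ 2 / 2 + z * a) ^ θ₁) ^ (1/θ₁)) ^ (1/(1/θ₁)) *
        (∫ z in S, (Real.exp (-z ^ 2 / 2 + z * b) ^ θ₂) ^ (1/θ₂)) ^ (1/(1/θ₂)) := key
    _ = (∫ z in S, Real.exp (-z ^ 2 / 2 + z * a)) ^ θ₁ *
        (∫ z in S, Real.exp (-z ^ 2 / 2 + z * b)) ^ θ₂ := by
        simp_rw [hfp a θ₁ h1, hfp b θ₂ h2, one_div_one_div]


lemma convexG {S : Set ℝ}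
    (hpos : ∀ t : ℝ, 0 < ∫ z in S, Real.exp (-z ^ 2 / 2 + z * t))
    (hint : ∀ t : ℝ, IntegrableOn (fun z : ℝ => Real.exp (-z ^ 2 / 2 + z * t)) S) :
    ConvexOn ℝ Set.univ (fun t : ℝ => Real.log (∫ z in S, Real.exp (-z ^ 2 / 2 + z * t))) := by
  refine ⟨convex_univ, fun a _ b _ θ₁ θ₂ h1 h2 hsum => ?_⟩
  rcases eq_or_lt_of_le h1 with h1' | h1'
  · simp only [← h1', zero_smul, zero_add, zero_mul] at hsum ⊢
    rw [hsum, one_smul, one_smul]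
  rcases eq_or_lt_of_le h2 with h2' | h2'
  · simp only [← h2', zero_smul, add_zero, zero_mul] at hsum ⊢
    rw [hsum, one_smul, one_smul]
  simp only [smul_eq_mul]
  have key := holder_step hint (a := a) (b := b) h1' h2' hsum
  have hlog := Real.log_le_log (hpos (θ₁ * a + θ₂ * b)) key
  rwa [Real.log_mul (Real.rpow_pos_of_pos (hpos a) _).ne' (Real.rpow_pos_of_pos (hpos b) _).ne',
    Real.log_rpow (hpos a), Real.log_rpow (hpos b)] at hlog

variable {E : Type*} [NormedAddCommGroup E] [InnerProductSpace ℝ E]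

lemma convexOn_comp_inner {f : ℝ → ℝ} (hf : ConvexOn ℝ Set.univ f) (v : E) :
    ConvexOn ℝ Set.univ (fun w : E => f ⟪w, v⟫) := by
  refine ⟨convex_univ, fun a _ b _ θ₁ θ₂ h1 h2 hsum => ?_⟩
  have : ⟪θ₁ • a + θ₂ • b, v⟫ = θ₁ * ⟪a, v⟫ + θ₂ * ⟪b, v⟫ := by
    simp [inner_add_left, real_inner_smul_left]
  simp only [this]
  exact hf.2 (Set.mem_univ _) (Set.mem_univ _) h1 h2 hsum

lemma concave_affine_sub {G : ℝ → ℝ} (hG : ConvexOn ℝ Set.univ G) (A B : ℝ) (v : E) :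
    ConcaveOn ℝ Set.univ (fun w : E => A + (B * ⟪w, v⟫ - G ⟪w, v⟫)) := by
  refine ⟨convex_univ, fun a _ b _ θ₁ θ₂ h1 h2 hsum => ?_⟩
  have hi : ⟪θ₁ • a + θ₂ • b, v⟫ = θ₁ * ⟪a, v⟫ + θ₂ * ⟪b, v⟫ := by
    simp [inner_add_left, real_inner_smul_left]
  have hGle := hG.2 (Set.mem_univ (⟪a,v⟫ : ℝ)) (Set.mem_univ (⟪b,v⟫ : ℝ)) h1 h2 hsum
  simp only [smul_eq_mul, hi] at hGle ⊢
  have key : θ₁ * (A + (B * ⟪a,v⟫ - G ⟪a,v⟫)) + θ₂ * (A + (B * ⟪b,v⟫ - G ⟪b,v⟫))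
      = A + B * (θ₁ * ⟪a,v⟫ + θ₂ * ⟪b,v⟫) - (θ₁ * G ⟪a,v⟫ + θ₂ * G ⟪b,v⟫) := by
    linear_combination A * hsum
  rw [key]
  linarith [hGle]

lemma convexOn_finset_sum {ι : Type*} (s : Finset ι) {f : ι → E → ℝ}
    (h : ∀ i ∈ s, ConvexOn ℝ Set.univ (f i)) :
    ConvexOn ℝ Set.univ (fun w : E => ∑ i ∈ s, f i w) := by
  classical
  induction s using Finset.induction_on with
  | empty => simpa using convexOn_const 0 convex_univ
  | insert _ _ hni ih =>
    rename_i a s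
    simp only [Finset.sum_insert hni]
    exact (h a (Finset.mem_insert_self a s)).add
      (ih fun i hi => h i (Finset.mem_insert_of_mem hi))

lemma concaveOn_finset_sum {ι : Type*} (s : Finset ι) {f : ι → E → ℝ}
    (h : ∀ i ∈ s, ConcaveOn ℝ Set.univ (f i)) :
    ConcaveOn ℝ Set.univ (fun w : E => ∑ i ∈ s, f i w) := by
  classical
  induction s using Finset.induction_on with
  | empty => simpa using concaveOn_const 0 convex_univ
  | insert _ _ hni ih =>
    rename_i a s
    simp only [Finset.sum_insert hni]
    exact (h a (Finset.mem_insert_self a s)).add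
      (ih fun i hi => h i (Finset.mem_insert_of_mem hi))


lemma gauss_ne_zero {S : Set ℝ} (μ : ℝ)
    (hpos : ∀ t : ℝ, 0 < ∫ z in S, Real.exp (-z ^ 2 / 2 + z * t)) :
    gaussianReal μ 1 S ≠ 0 := by
  intro h
  have hvol : (volume : Measure ℝ) S = 0 :=
    gaussianReal_absolutelyContinuous' μ one_ne_zero h
  have := hpos 0
  rw [show (volume : Measure ℝ).restrict S = 0 from Measure.restrict_eq_zero.mpr hvol,
    integral_zero_measure] at this
  exact lt_irrefl _ this

lemma truncGaussian_isProb {S : Set ℝ} (μ : ℝ)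
    (h : gaussianReal μ 1 S ≠ 0) : IsProbabilityMeasure (truncGaussian μ S) :=
  cond_isProbabilityMeasure h

-- integrability of polynomials against gaussian
lemma integrable_poly_gaussian (μ : ℝ) :
    Integrable (fun y : ℝ => y ^ 2) (gaussianReal μ 1) ∧
    Integrable (fun y : ℝ => y) (gaussianReal μ 1) := by
  have hrw : gaussianReal μ 1 = volume.withDensity (gaussianPDF μ 1) :=
    gaussianReal_of_var_ne_zero μ one_ne_zero
  have hlt : ∀ᵐ x : ℝ, gaussianPDF μ 1 x < ∞ :=
    ae_of_all _ fun x => ENNReal.ofReal_lt_top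
  have hmeas := measurable_gaussianPDF μ 1
  have htoReal : ∀ x : ℝ, (gaussianPDF μ 1 x).toReal = gaussianPDFReal μ 1 x := fun x =>
    ENNReal.toReal_ofReal (gaussianPDFReal_nonneg μ 1 x)
  -- base integrability facts on volume
  have hb : (0:ℝ) < 1/2 := by norm_num
  have e1 : Integrable (fun y : ℝ => Real.exp (-(1/2) * y ^ 2)) volume := by
    simpa [sq] using integrable_exp_neg_mul_sq hb
  have e2 : Integrable (fun y : ℝ => y * Real.exp (-(1/2) * y ^ 2)) volume := by
    simpa [sq] using integrable_mul_exp_neg_mul_sq hb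
  have e3 : Integrable (fun y : ℝ => y ^ 2 * Real.exp (-(1/2) * y ^ 2)) volume := by
    have := integrable_rpow_mul_exp_neg_mul_sq hb (s := 2) (by norm_num)
    have heq : ∀ y : ℝ, |y| ^ (2:ℝ) * Real.exp (-(1/2) * y ^ 2)
        = y ^ 2 * Real.exp (-(1/2) * y ^ 2) := by
      intro y
      rw [show |y| ^ (2:ℝ) = |y| ^ (2:ℕ) from Real.rpow_natCast _ 2, sq_abs]
    simpa [sq, heq] using this
  -- shifted versions
  have hsq : Integrable (fun y : ℝ => y ^ 2 * Real.exp (-(1/2) * (y - μ) ^ 2)) volume := by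
    have base : Integrable (fun y : ℝ => (y + μ) ^ 2 * Real.exp (-(1/2) * y ^ 2)) volume := by
      have : (fun y : ℝ => (y + μ) ^ 2 * Real.exp (-(1/2) * y ^ 2))
          = fun y : ℝ => (y ^ 2 * Real.exp (-(1/2) * y ^ 2)
              + (2 * μ) * (y * Real.exp (-(1/2) * y ^ 2)))
              + μ ^ 2 * Real.exp (-(1/2) * y ^ 2) := by
        funext y; ring
      rw [this]
      exact (e3.add (e2.const_mul _)).add (e1.const_mul _)
    have := base.comp_sub_right μ
    simpa using this
  have hid : Integrable (fun y : ℝ => y * Real.exp (-(1/2) * (y - μ) ^ 2)) volume := by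
    have base : Integrable (fun y : ℝ => (y + μ) * Real.exp (-(1/2) * y ^ 2)) volume := by
      have : (fun y : ℝ => (y + μ) * Real.exp (-(1/2) * y ^ 2))
          = fun y : ℝ => y * Real.exp (-(1/2) * y ^ 2) + μ * Real.exp (-(1/2) * y ^ 2) := by
        funext y; ring
      rw [this]
      exact e2.add (e1.const_mul _)
    have := base.comp_sub_right μ
    simpa using this
  have hpdf : ∀ y : ℝ, gaussianPDFReal μ 1 y
      = (Real.sqrt (2 * Real.pi))⁻¹ * Real.exp (-(1/2) * (y - μ) ^ 2) := by
    intro y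
    rw [gaussianPDFReal]
    norm_num
    left
    ring
  constructor
  · rw [hrw, integrable_withDensity_iff hmeas hlt]
    simp only [htoReal, hpdf]
    have : (fun y : ℝ => y ^ 2 * ((Real.sqrt (2 * Real.pi))⁻¹ * Real.exp (-(1/2) * (y - μ) ^ 2)))
        = fun y : ℝ => (Real.sqrt (2 * Real.pi))⁻¹ * (y ^ 2 * Real.exp (-(1/2) * (y - μ) ^ 2)) := by
      funext y; ring
    rw [this]
    exact hsq.const_mul _
  · rw [hrw, integrable_withDensity_iff hmeas hlt]
    simp only [htoReal, hpdf]
    have : (fun y : ℝ => y * ((Real.sqrt (2 * Real.pi))⁻¹ * Real.exp (-(1/2) * (y - μ) ^ 2)))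
        = fun y : ℝ => (Real.sqrt (2 * Real.pi))⁻¹ * (y * Real.exp (-(1/2) * (y - μ) ^ 2)) := by
      funext y; ring
    rw [this]
    exact hid.const_mul _


lemma trunc_integral_eq {S : Set ℝ}
    (hpos : ∀ t : ℝ, 0 < ∫ z in S, Real.exp (-z ^ 2 / 2 + z * t)) (μ m : ℝ) :
    ∫ y, (-(1 / 2) * (y - m) ^ 2 - Real.log (∫ z in S, Real.exp (-(z - m) ^ 2 / 2)))
        ∂(truncGaussian μ S)
      = (∫ y, -(1 / 2) * y ^ 2 ∂(truncGaussian μ S))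
        + (∫ y, y ∂(truncGaussian μ S)) * m
        - Real.log (∫ z in S, Real.exp (-z ^ 2 / 2 + z * m)) := by
  have hne := gauss_ne_zero μ hpos
  haveI : IsProbabilityMeasure (truncGaussian μ S) := cond_isProbabilityMeasure hne
  -- rewrite the inner log
  have hlog : Real.log (∫ z in S, Real.exp (-(z - m) ^ 2 / 2))
      = -m ^ 2 / 2 + Real.log (∫ z in S, Real.exp (-z ^ 2 / 2 + z * m)) := by
    have h1 : (∫ z in S, Real.exp (-(z - m) ^ 2 / 2))
        = Real.exp (-m ^ 2 / 2) * ∫ z in S, Real.exp (-z ^ 2 / 2 + z * m) := by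
      rw [← integral_const_mul]
      congr 1
      funext z
      rw [← Real.exp_add]
      congr 1
      ring
    rw [h1, Real.log_mul (Real.exp_ne_zero _) (hpos m).ne', Real.log_exp]
  -- pointwise rewrite of the integrand
  have hpt : (fun y : ℝ => -(1 / 2) * (y - m) ^ 2
        - Real.log (∫ z in S, Real.exp (-(z - m) ^ 2 / 2)))
      = fun y : ℝ => -(1 / 2) * y ^ 2
        + (y * m - Real.log (∫ z in S, Real.exp (-z ^ 2 / 2 + z * m))) := by
    funext y
    rw [hlog]
    ring
  rw [hpt]
  -- integrability over the truncated gaussian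
  have hconv : ∀ f : ℝ → ℝ, Integrable f (gaussianReal μ 1) →
      Integrable f (truncGaussian μ S) := by
    intro f hf
    have : truncGaussian μ S = ((gaussianReal μ 1) S)⁻¹ • (gaussianReal μ 1).restrict S := rfl
    rw [this]
    exact (hf.restrict).smul_measure (ENNReal.inv_ne_top.mpr hne)
  have hsq : Integrable (fun y : ℝ => -(1/2) * y ^ 2) (truncGaussian μ S) :=
    (hconv _ (integrable_poly_gaussian μ).1).const_mul _
  have hid : Integrable (fun y : ℝ => y) (truncGaussian μ S) :=
    hconv _ (integrable_poly_gaussian μ).2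
  have h2 : Integrable (fun y : ℝ => y * m
      - Real.log (∫ z in S, Real.exp (-z ^ 2 / 2 + z * m))) (truncGaussian μ S) :=
    (hid.mul_const m).sub (integrable_const _)
  rw [integral_add hsq h2]
  have h3 : ∫ y, (y * m - Real.log (∫ z in S, Real.exp (-z ^ 2 / 2 + z * m)))
        ∂(truncGaussian μ S)
      = (∫ y, y ∂(truncGaussian μ S)) * m
        - Real.log (∫ z in S, Real.exp (-z ^ 2 / 2 + z * m)) := by
    rw [integral_sub (hid.mul_const m) (integrable_const _), integral_mul_const, integral_const]
    simp
  rw [h3]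
  ring


theorem stmt7 {k n : ℕ} (S : Set ℝ) (hS : MeasurableSet S)
    (hpos : ∀ t : ℝ, 0 < ∫ z in S, Real.exp (-z ^ 2 / 2 + z * t))
    (hint : ∀ t : ℝ, IntegrableOn (fun z : ℝ => Real.exp (-z ^ 2 / 2 + z * t)) S)
    (x : Fin n → EuclideanSpace ℝ (Fin k)) (wstar : EuclideanSpace ℝ (Fin k)) :
    ConvexOn ℝ Set.univ (fun w : EuclideanSpace ℝ (Fin k) =>
      (1 / n : ℝ) * ∑ i, Real.log (∫ z in S, Real.exp (-z ^ 2 / 2 + z * ⟪w, x i⟫))) ∧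
    ConcaveOn ℝ Set.univ (fun w : EuclideanSpace ℝ (Fin k) =>
      (1 / n : ℝ) * ∑ i, ∫ y, (-(1 / 2) * (y - ⟪w, x i⟫) ^ 2 -
          Real.log (∫ z in S, Real.exp (-(z - ⟪w, x i⟫) ^ 2 / 2)))
        ∂(truncGaussian ⟪wstar, x i⟫ S)) := by
  have hG := convexG hpos hint
  have hcoef : (0:ℝ) ≤ 1 / n := by positivity
  constructor
  · have := (convexOn_finset_sum (E := EuclideanSpace ℝ (Fin k)) Finset.univ
      (f := fun i w => Real.log (∫ z in S, Real.exp (-z ^ 2 / 2 + z * ⟪w, x i⟫)))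
      (fun i _ => convexOn_comp_inner hG (x i))).smul hcoef
    simpa only [smul_eq_mul] using this
  · set A : Fin n → ℝ := fun i => ∫ y, -(1 / 2) * y ^ 2 ∂(truncGaussian ⟪wstar, x i⟫ S) with hA
    set B : Fin n → ℝ := fun i => ∫ y, y ∂(truncGaussian ⟪wstar, x i⟫ S) with hB
    have hfun : (fun w : EuclideanSpace ℝ (Fin k) =>
        (1 / n : ℝ) * ∑ i, ∫ y, (-(1 / 2) * (y - ⟪w, x i⟫) ^ 2 -
          Real.log (∫ z in S, Real.exp (-(z - ⟪w, x i⟫) ^ 2 / 2)))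
          ∂(truncGaussian ⟪wstar, x i⟫ S))
        = fun w : EuclideanSpace ℝ (Fin k) =>
        (1 / n : ℝ) * ∑ i, (A i + (B i * ⟪w, x i⟫
          - Real.log (∫ z in S, Real.exp (-z ^ 2 / 2 + z * ⟪w, x i⟫)))) := by
      funext w
      congr 1
      refine Finset.sum_congr rfl fun i _ => ?_
      rw [trunc_integral_eq hpos ⟪wstar, x i⟫ ⟪w, x i⟫]
      ring
    rw [hfun]
    have := (concaveOn_finset_sum (E := EuclideanSpace ℝ (Fin k)) Finset.univ
      (f := fun i w => A i + (B i * ⟪w, x i⟫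
        - Real.log (∫ z in S, Real.exp (-z ^ 2 / 2 + z * ⟪w, x i⟫))))
      (fun i _ => concave_affine_sub hG (A i) (B i) (x i))).smul hcoef
    simpa only [smul_eq_mul] using this
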